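/- Let {q_t^z} be a 1f-specification (one-point distributions with finite boundary conditions satisfying q_t^z(x)q_s^{zx}(y) = q_s^z(y)q_t^{zy}(x)). For a finite set V with enumeration V = {t₁,…,t_n} and boundary condition z outside V, define q_V^z(x) = q_{t₁}^z(x₁)·q_{t₂}^{z x₁}(x₂)·…·q_{t_n}^{z x₁…x_{n-1}}(x_n). Then q_V^z does not depend on the enumeration of V, is a probability distribution on X^V, and the family {q_V^z} satisfies the f-specification consistency q_{V∪I}^z(xy) = q_V^z(x)·q_I^{zx}(y) for disjoint V, I. -/

import Mathlib

/-- A positive `1f`-specification: to each site `t` and each finite boundary set `B`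
(not containing `t`) with boundary configuration `z` (encoded as a full function
`S → X`, with `q t B z x` depending on `z` only through its values on `B`) it assigns
a positive probability distribution `q t B z ·` on `X`, and the two-point consistency
conditions `q_t^z(x) q_s^{zx}(y) = q_s^z(y) q_t^{zy}(x)` hold. -/
structure IsOnePointSpec {S X : Type*} [DecidableEq S] [Fintype X]
    (q : S → Finset S → (S → X) → X → ℝ) : Prop where
  isLocal : ∀ (t : S) (B : Finset S) (z z' : S → X) (x : X),
    (∀ u ∈ B, z u = z' u) → q t B z x = q t B z' x
  pos : ∀ (t : S) (B : Finset S), t ∉ B → ∀ z x, 0 < q t B z x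
  sum_one : ∀ (t : S) (B : Finset S), t ∉ B → ∀ z, ∑ x : X, q t B z x = 1
  consistent : ∀ (t s : S), t ≠ s → ∀ B : Finset S, t ∉ B → s ∉ B →
    ∀ (z : S → X) (x y : X),
      q t B z x * q s (B ∪ {t}) (Function.update z t x) y
        = q s B z y * q t (B ∪ {s}) (Function.update z s y) x

/-- `setOn x A σ`: the full configuration equal to `σ` on `A` and `x` elsewhere. -/
def setOn {S X : Type*} [DecidableEq S] (x : S → X) (A : Finset S)
    (σ : {u // u ∈ A} → X) : S → X :=
  fun u => if h : u ∈ A then σ ⟨u, h⟩ else x u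

/-- `patch z A x`: the concatenated boundary condition equal to `x` on `A`, `z` elsewhere. -/
def patch {S X : Type*} [DecidableEq S] (z : S → X) (A : Finset S) (x : S → X) : S → X :=
  fun u => if u ∈ A then x u else z u

/-- The product `q_{t₁}^z(x₁)·q_{t₂}^{zx₁}(x₂)·…·q_{t_n}^{zx₁…x_{n-1}}(x_n)` of
formula (Q1->Q-1), along the enumeration given by the list `L`, with boundary set `B`
and boundary configuration `z`. -/
def qProd {S X : Type*} [DecidableEq S] (q : S → Finset S → (S → X) → X → ℝ) :
    List S → Finset S → (S → X) → (S → X) → ℝ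
  | [], _, _, _ => 1
  | t :: L, B, z, x => q t B z (x t) * qProd q L (B ∪ {t}) (Function.update z t (x t)) x

section Aux
variable {S X : Type*} [DecidableEq S] [Fintype X]
variable {q : S → Finset S → (S → X) → X → ℝ}

lemma qProd_local (hq : IsOnePointSpec q) :
    ∀ (L : List S) (B : Finset S) (z z' x x' : S → X),
    (∀ u ∈ B, z u = z' u) → (∀ u ∈ L, x u = x' u) →
    qProd q L B z x = qProd q L B z' x'
  | [], _, _, _, _, _, _, _ => rfl
  | t :: L, B, z, z', x, x', hz, hx => by
    have hxt : x t = x' t := hx t List.mem_cons_self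
    rw [qProd, qProd, hq.isLocal t B z z' (x t) hz, hxt]
    congr 1
    refine qProd_local hq L (B ∪ {t}) _ _ x x' (fun u hu => ?_)
      (fun u hu => hx u (List.mem_cons_of_mem t hu))
    rcases Finset.mem_union.1 hu with h | h
    · by_cases hut : u = t
      · subst hut; simp
      · simp [Function.update_of_ne hut, hz u h]
    · have : u = t := Finset.mem_singleton.1 h
      subst this; simp

lemma qProd_swap (hq : IsOnePointSpec q) (t s : S) (hts : t ≠ s) (B : Finset S)
    (ht : t ∉ B) (hs : s ∉ B) (L : List S) (z x : S → X) :
    qProd q (t :: s :: L) B z x = qProd q (s :: t :: L) B z x := by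
  simp only [qProd, ← mul_assoc]
  rw [hq.consistent t s hts B ht hs z (x t) (x s), Function.update_comm hts,
    Finset.union_right_comm]

lemma qProd_perm (hq : IsOnePointSpec q) {L L' : List S} (h : L.Perm L') :
    ∀ B : Finset S, L.Nodup → Disjoint L.toFinset B → ∀ z x : S → X,
      qProd q L B z x = qProd q L' B z x := by
  induction h with
  | nil => intro B _ _ z x; rfl
  | cons a h ih =>
    intro B hnd hdis z x
    simp only [List.toFinset_cons, Finset.insert_eq, Finset.disjoint_union_left] at hdis
    simp only [qProd]
    congr 1
    refine ih (B ∪ {a}) (List.nodup_cons.1 hnd).2 ?_ _ _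
    rw [Finset.disjoint_union_right]
    refine ⟨hdis.2, ?_⟩
    rw [Finset.disjoint_singleton_right]
    simpa using (List.nodup_cons.1 hnd).1
  | swap a b l =>
    intro B hnd hdis z x
    have hab : b ≠ a := by
      have := (List.nodup_cons.1 hnd).1; simp at this; tauto
    simp only [List.toFinset_cons, Finset.insert_eq, Finset.disjoint_union_left] at hdis
    have hbB : b ∉ B := by
      simpa [Finset.disjoint_singleton_left] using hdis.1
    have haB : a ∉ B := by
      have := hdis.2.1; simpa [Finset.disjoint_singleton_left] using this
    exact qProd_swap hq b a hab B hbB haB l z x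
  | trans h1 h2 ih1 ih2 =>
    intro B hnd hdis z x
    rw [ih1 B hnd hdis z x,
      ih2 B (h1.nodup hnd) (by rwa [← List.toFinset_eq_of_perm _ _ h1]) z x]

lemma qProd_append (hq : IsOnePointSpec q) :
    ∀ (L M : List S) (B : Finset S) (z x : S → X),
      qProd q (L ++ M) B z x
        = qProd q L B z x * qProd q M (B ∪ L.toFinset) (patch z L.toFinset x) x
  | [], M, B, z, x => by
    have h1 : patch z (∅ : Finset S) x = z := by
      funext u; simp [patch]
    simp [qProd, List.toFinset_nil, h1]
  | t :: L, M, B, z, x => by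
    have hB : B ∪ {t} ∪ L.toFinset = B ∪ (t :: L).toFinset := by
      rw [List.toFinset_cons, Finset.insert_eq, Finset.union_assoc]
    have hz : patch (Function.update z t (x t)) L.toFinset x
        = patch z (t :: L).toFinset x := by
      funext u
      by_cases h : u ∈ L.toFinset
      · simp [patch, h]
      · by_cases hut : u = t
        · subst hut; simp [patch, h]
        · simp [patch, h, Function.update_of_ne hut, hut]
    show q t B z (x t) * qProd q (L ++ M) (B ∪ {t}) (Function.update z t (x t)) x = _
    rw [qProd_append hq L M (B ∪ {t}) (Function.update z t (x t)) x, hB, hz,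
      ← mul_assoc]
    rfl

lemma qProd_sum (hq : IsOnePointSpec q) :
    ∀ (L : List S), L.Nodup → ∀ (B : Finset S), Disjoint L.toFinset B →
      ∀ (z x : S → X),
      ∑ σ : {u // u ∈ L.toFinset} → X, qProd q L B z (setOn x L.toFinset σ) = 1
  | [], _, B, hdis, z, x => by
    haveI : IsEmpty {u // u ∈ ([] : List S).toFinset} :=
      ⟨fun u => (List.not_mem_nil (List.mem_toFinset.1 u.2)).elim⟩
    have h1 : ∀ σ : {u // u ∈ ([] : List S).toFinset} → X,
        qProd q [] B z (setOn x ([] : List S).toFinset σ) = 1 := fun _ => rfl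
    simp only [h1, Finset.sum_const, smul_eq_mul, mul_one]
    rw [Finset.card_univ, nsmul_one, Nat.cast_eq_one, Fintype.card_eq_one_iff]
    exact ⟨isEmptyElim, fun f => funext isEmptyElim⟩
  | t :: L, hnd, B, hdis, z, x => by
    obtain ⟨htL, hndL⟩ := List.nodup_cons.1 hnd
    have hts : t ∉ L.toFinset := by simpa using htL
    simp only [List.toFinset_cons, Finset.insert_eq, Finset.disjoint_union_left] at hdis
    have htB : t ∉ B := by simpa [Finset.disjoint_singleton_left] using hdis.1
    have hLB : Disjoint L.toFinset B := hdis.2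
    -- the equivalence
    have htmem : t ∈ (t :: L).toFinset := by simp
    have hsub : ∀ u : S, u ∈ L.toFinset → u ∈ (t :: L).toFinset := by
      intro u hu; simp [List.toFinset_cons]; right; simpa using hu
    let e : ({u // u ∈ (t :: L).toFinset} → X) ≃ X × ({u // u ∈ L.toFinset} → X) :=
    { toFun := fun σ => (σ ⟨t, htmem⟩, fun u => σ ⟨u.1, hsub u.1 u.2⟩)
      invFun := fun p u => if h : u.1 ∈ L.toFinset then p.2 ⟨u.1, h⟩ else p.1
      left_inv := by
        intro σ; funext u
        by_cases h : u.1 ∈ L.toFinset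
        · simp only [h, dif_pos]
        · have hu : u.1 = t := by
            have := u.2; simp [List.toFinset_cons] at this
            rcases this with h' | h'
            · exact h'
            · exact absurd (by simpa using h') h
          simp only [h, dif_neg, not_false_iff]
          congr 1
          exact Subtype.ext hu.symm
      right_inv := by
        intro p
        refine Prod.ext ?_ ?_
        · simp [hts]
        · funext u; simp [u.2] }
    rw [← Equiv.sum_comp e.symm, Fintype.sum_prod_type]
    have key : ∀ (a : X) (τ : {u // u ∈ L.toFinset} → X),
        qProd q (t :: L) B z (setOn x (t :: L).toFinset (e.symm (a, τ)))
          = q t B z a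
            * qProd q L (B ∪ {t}) (Function.update z t a) (setOn x L.toFinset τ) := by
      intro a τ
      have hat : setOn x (t :: L).toFinset (e.symm (a, τ)) t = a := by
        simp only [setOn, htmem, dif_pos]
        show (if h : t ∈ L.toFinset then τ ⟨t, h⟩ else a) = a
        simp [hts]
      show q t B z (setOn x (t :: L).toFinset (e.symm (a, τ)) t) * _ = _
      rw [hat]
      congr 1
      refine qProd_local hq L (B ∪ {t}) _ _ _ _ (fun u _ => rfl) (fun u hu => ?_)
      have huL : u ∈ L.toFinset := by simpa using hu
      simp only [setOn, huL, hsub u huL, dif_pos]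
      show (if h : u ∈ L.toFinset then τ ⟨u, h⟩ else a) = τ ⟨u, huL⟩
      simp [huL]
    simp only [key]
    rw [show (1 : ℝ) = ∑ a : X, q t B z a from (hq.sum_one t B htB z).symm]
    refine Finset.sum_congr rfl (fun a _ => ?_)
    rw [← Finset.mul_sum,
      qProd_sum hq L hndL (B ∪ {t})
        (by rw [Finset.disjoint_union_right]
            exact ⟨hLB, by rwa [Finset.disjoint_singleton_right]⟩)
        (Function.update z t a) x, mul_one]

end Aux

/-- Theorem Th-Q1f->Qf: for a `1f`-specification, the family
`q_V^z(x) = q_{t₁}^z(x₁)·…·q_{t_n}^{zx₁…x_{n-1}}(x_n)` (1) does not depend on the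
enumeration of `V`, (2) is a probability distribution on `X^V`, and (3) satisfies the
`f`-specification consistency `q_{V∪I}^z(xy) = q_V^z(x)·q_I^{zx}(y)` for disjoint `V`, `I`. -/
theorem one_point_extends_to_fspec {S X : Type*} [DecidableEq S] [Fintype X] [Nonempty X]
    (q : S → Finset S → (S → X) → X → ℝ) (hq : IsOnePointSpec q) :
    (∀ L L' : List S, L.Nodup → L'.Nodup → L.toFinset = L'.toFinset →
      ∀ B : Finset S, Disjoint L.toFinset B → ∀ z x : S → X,
        qProd q L B z x = qProd q L' B z x)
    ∧ (∀ L : List S, L.Nodup → ∀ B : Finset S, Disjoint L.toFinset B →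
        ∀ z x : S → X,
          ∑ σ : {u // u ∈ L.toFinset} → X, qProd q L B z (setOn x L.toFinset σ) = 1)
    ∧ (∀ L M : List S, (L ++ M).Nodup → ∀ B : Finset S,
        Disjoint (L ++ M).toFinset B → ∀ z x : S → X,
          qProd q (L ++ M) B z x
            = qProd q L B z x * qProd q M (B ∪ L.toFinset) (patch z L.toFinset x) x) := by
  refine ⟨?_, ?_, ?_⟩
  · intro L L' hL hL' hfs B hdis z x
    exact qProd_perm hq (List.perm_of_nodup_nodup_toFinset_eq hL hL' hfs) B hL hdis z x
  · intro L hL B hdis z x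
    exact qProd_sum hq L hL B hdis z x
  · intro L M _ B _ z x
    exact qProd_append hq L M B z x
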